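/- There is a constant C ≥ 1 depending only on d and M such that for all x, y ∈ E(ω) with x = Π(𝚒), y = Π(𝚓), writing 𝚔 = 𝚒 ∧ 𝚓 for the longest common prefix and 𝚒 = 𝚔𝚒', 𝚓 = 𝚔𝚓', one has C^{-1} M^{|𝚔|−|𝚔̃|}|x−y| ≤ |f(x)−f(y)| ≤ C M^{|𝚔|−|𝚔̃|}|x−y|; moreover M^{−|𝚔̃|}|Π(𝚒')−Π(𝚓')| = M^{|𝚔|−|𝚔̃|}|x−y|. -/

import Mathlib

open MeasureTheory ProbabilityTheory Set Filter
open scoped ENNReal NNReal Topology Classical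

noncomputable section

namespace FractalPercolation

/-! ### Words -/

/-- The finite word `𝚒|_n` obtained by truncating an infinite word. -/
def wordTake (d M : ℕ) (i : ℕ → Fin (M ^ d)) (n : ℕ) : List (Fin (M ^ d)) :=
  List.ofFn fun k : Fin n => i k

/-- The shift `σ^n 𝚒` of an infinite word. -/
def shiftW (d M : ℕ) (n : ℕ) (i : ℕ → Fin (M ^ d)) : ℕ → Fin (M ^ d) := fun t => i (n + t)

/-- The concatenation `𝚠𝚖` of a finite word with an infinite word. -/
def extendW (d M : ℕ) (w : List (Fin (M ^ d))) (m : ℕ → Fin (M ^ d)) : ℕ → Fin (M ^ d) :=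
  fun t => if h : t < w.length then w.get ⟨t, h⟩ else m (t - w.length)

/-! ### Geometry: cubes and the natural projection -/

/-- Lower-left corner of the `M`-adic cube labelled by the finite word `w`; the labelling
`lab` sends a symbol to the vector of integer offsets (in `{0,…,M-1}^d`) of the corresponding
subcube. -/
def corner (d M : ℕ) (lab : Fin (M ^ d) → Fin d → Fin M) :
    List (Fin (M ^ d)) → Fin d → ℝ
  | [] => fun _ => 0
  | i :: w => fun k => ((lab i k : ℝ) + corner d M lab w k) / (M : ℝ)

/-- The closed `M`-adic cube `Q_𝚠 ⊆ [0,1]^d` labelled by the finite word `w`. -/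
def cube (d M : ℕ) (lab : Fin (M ^ d) → Fin d → Fin M) (w : List (Fin (M ^ d))) :
    Set (Fin d → ℝ) :=
  {x | ∀ k, corner d M lab w k ≤ x k ∧ x k ≤ corner d M lab w k + ((M : ℝ) ^ w.length)⁻¹}

/-- The homothety `h_{Q_𝚠}` sending `[0,1]^d` onto `Q_𝚠`. -/
def hQ (d M : ℕ) (lab : Fin (M ^ d) → Fin d → Fin M) (w : List (Fin (M ^ d)))
    (y : Fin d → ℝ) : Fin d → ℝ :=
  fun k => corner d M lab w k + ((M : ℝ) ^ w.length)⁻¹ * y k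

/-- The natural projection `Π : Λ^ℕ → [0,1]^d`, `{Π(𝚒)} = ⋂_n Q_{𝚒|_n}`. -/
def PiInf (d M : ℕ) (lab : Fin (M ^ d) → Fin d → Fin M) (i : ℕ → Fin (M ^ d)) :
    Fin d → ℝ :=
  fun k => ⨆ n, corner d M lab (wordTake d M i n) k

/-- The cube concentric with the cube of lower-left corner `c` and side length `ℓ`,
with side length `κ·ℓ`. -/
def concCube (d : ℕ) (c : Fin d → ℝ) (ℓ κ : ℝ) : Set (Fin d → ℝ) :=
  {x | ∀ k, c k + (1 - κ) * ℓ / 2 ≤ x k ∧ x k ≤ c k + (1 + κ) * ℓ / 2}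

/-! ### The labelling -/

/-- The set `Λ_B` of labels of subcubes meeting the boundary. -/
def LamB (d M : ℕ) : Set (Fin (M ^ d)) := {i | (i : ℕ) < M ^ d - (M - 2) ^ d}

/-- `lab` is a genuine labelling of the `M^d` subcubes such that the symbols in `Λ_B`
are exactly those of subcubes meeting the boundary of `[0,1]^d`. -/
def LabSpec (d M : ℕ) (lab : Fin (M ^ d) → Fin d → Fin M) : Prop :=
  Function.Bijective lab ∧
    ∀ i, i ∈ LamB d M ↔ ∃ k, (lab i k : ℕ) = 0 ∨ (lab i k : ℕ) = M - 1

/-! ### The percolation process -/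

/-- The finite word `w` survives (i.e. `w ∈ T_{|w|}(ω)`): all its nonempty prefixes
are retained. -/
def Alive (d M : ℕ) {Ω : Type*} (X : List (Fin (M ^ d)) → Ω → Bool) (ω : Ω)
    (w : List (Fin (M ^ d))) : Prop :=
  ∀ u : List (Fin (M ^ d)), u ≠ [] → u <+: w → X u ω = true

/-- The infinite word `𝚒` survives, i.e. `𝚒 ∈ T(ω)`. -/
def TInf (d M : ℕ) {Ω : Type*} (X : List (Fin (M ^ d)) → Ω → Bool) (ω : Ω)
    (i : ℕ → Fin (M ^ d)) : Prop :=
  ∀ n, Alive d M X ω (wordTake d M i n)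

/-- The fractal percolation set `E(ω) = Π(T(ω))`. -/
def Eset (d M : ℕ) (lab : Fin (M ^ d) → Fin d → Fin M) {Ω : Type*}
    (X : List (Fin (M ^ d)) → Ω → Bool) (ω : Ω) : Set (Fin d → ℝ) :=
  {x | ∃ i, TInf d M X ω i ∧ PiInf d M lab i = x}

/-- `(X_𝚒)_{𝚒∈Λ^*}` are i.i.d. Bernoulli(p) random variables under `P`. -/
def PercSpec (d M : ℕ) {Ω : Type*} [MeasurableSpace Ω] (P : Measure Ω)
    (X : List (Fin (M ^ d)) → Ω → Bool) (p : ℝ) : Prop :=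
  (∀ w, Measurable (X w)) ∧
    iIndepFun X P ∧
    ∀ w, P {ω | X w ω = true} = ENNReal.ofReal p

/-- The σ-algebra `𝓑_n` generated by `{X_𝚒 : |𝚒| ≤ n}`. -/
def Bsig (d M : ℕ) {Ω : Type*} (X : List (Fin (M ^ d)) → Ω → Bool) (n : ℕ) :
    MeasurableSpace Ω :=
  ⨆ w ∈ {w : List (Fin (M ^ d)) | w.length ≤ n}, MeasurableSpace.comap (X w) ⊤

/-! ### The substitution map -/

/-- All subcubes of `Q_𝚠` meeting the boundary of `Q_𝚠` die at the next step. -/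
def BdryDead (d M : ℕ) {Ω : Type*} (X : List (Fin (M ^ d)) → Ω → Bool) (ω : Ω)
    (w : List (Fin (M ^ d))) : Prop :=
  ∀ j ∈ LamB d M, ¬ Alive d M X ω (w ++ [j])

/-- Auxiliary recursion for the substitution `𝚒 ↦ 𝚒̃`: `pfx` is the already processed
prefix of the original word. -/
def substAux (d M : ℕ) {Ω : Type*} (X : List (Fin (M ^ d)) → Ω → Bool)
    (e : List (Fin (M ^ d))) (ω : Ω) :
    List (Fin (M ^ d)) → List (Fin (M ^ d)) → List (Fin (M ^ d))
  | _, [] => []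
  | pfx, i :: rest =>
      (if BdryDead d M X ω pfx then e ++ [i] else [i]) ++
        substAux d M X e ω (pfx ++ [i]) rest

/-- The substitution `𝚠 ↦ 𝚠̃` (with substitution word `e = η`) applied to a finite word. -/
def substW (d M : ℕ) {Ω : Type*} (X : List (Fin (M ^ d)) → Ω → Bool)
    (e : List (Fin (M ^ d))) (ω : Ω) (w : List (Fin (M ^ d))) : List (Fin (M ^ d)) :=
  substAux d M X e ω ([]) w

/-- The point `Π(𝚒̃)` for an infinite word `𝚒`. -/
def PiTilde (d M : ℕ) (lab : Fin (M ^ d) → Fin d → Fin M) {Ω : Type*}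
    (X : List (Fin (M ^ d)) → Ω → Bool) (e : List (Fin (M ^ d))) (ω : Ω)
    (i : ℕ → Fin (M ^ d)) : Fin d → ℝ :=
  fun k => ⨆ n, corner d M lab (substW d M X e ω (wordTake d M i n)) k

/-- The image `F(ω) = f(E(ω))` of the substitution map. -/
def Fset (d M : ℕ) (lab : Fin (M ^ d) → Fin d → Fin M) {Ω : Type*}
    (X : List (Fin (M ^ d)) → Ω → Bool) (e : List (Fin (M ^ d))) (ω : Ω) :
    Set (Fin d → ℝ) :=
  {x | ∃ i, TInf d M X ω i ∧ PiTilde d M lab X e ω i = x}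

/-- The substitution word `e = η ∈ Λ^K` has length `K ≥ 1` and its first symbol labels
an inner cube. -/
def EtaSpec (d M K : ℕ) (e : List (Fin (M ^ d))) : Prop :=
  1 ≤ K ∧ e.length = K ∧ ∃ a l, e = a :: l ∧ a ∉ LamB d M

/-- `diam Q_𝚠 = M^{-|𝚠|}` (in the max-norm). -/
def diamQ (d M : ℕ) (w : List (Fin (M ^ d))) : ℝ := ((M : ℝ) ^ w.length)⁻¹

/-- The quantity `κ(s,K)` from the paper. -/
def kappa (d M : ℕ) (p : ℝ) (K : ℕ) (s : ℝ) : ℝ :=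
  1 - (((M : ℝ) - 2) ^ d / (M : ℝ) ^ d) * (1 - (M : ℝ) ^ (-(s * (K : ℝ)))) *
      (1 - p) ^ (M ^ d - (M - 2) ^ d)

/-- The quantity `κ' = lim_{K→∞} κ(s,K)` from the paper. -/
def kappa' (d M : ℕ) (p : ℝ) : ℝ :=
  1 - (((M : ℝ) - 2) ^ d / (M : ℝ) ^ d) * (1 - p) ^ (M ^ d - (M - 2) ^ d)

/-- The random sums `Y^t_n(ω) = Σ_{𝚒∈T_n(ω)} diam(Q_{𝚒̃})^t`. -/
def Yt (d M : ℕ) {Ω : Type*} (X : List (Fin (M ^ d)) → Ω → Bool)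
    (e : List (Fin (M ^ d))) (t : ℝ) (n : ℕ) (ω : Ω) : ℝ :=
  ∑ v : Fin n → Fin (M ^ d),
    if Alive d M X ω (List.ofFn v) then (diamQ d M (substW d M X e ω (List.ofFn v))) ^ t
    else 0

/-! ### Quasisymmetric maps -/

/-- `f` satisfies the quasisymmetry estimate with control function `η`. -/
def IsQSWith {α β : Type*} [PseudoMetricSpace α] [PseudoMetricSpace β]
    (η : ℝ≥0 → ℝ≥0) (f : α → β) : Prop :=
  ∀ x y z : α, x ≠ z →
    nndist (f x) (f y) / nndist (f x) (f z) ≤ η (nndist x y / nndist x z)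

/-- A homeomorphism is quasisymmetric if it admits a control function which is a
homeomorphism of `[0,∞)`. -/
def IsQSHomeo {α β : Type*} [MetricSpace α] [MetricSpace β] (f : α ≃ₜ β) : Prop :=
  ∃ η : ℝ≥0 ≃ₜ ℝ≥0, IsQSWith (⇑η) (⇑f)

/-! ### The auxiliary map g and the extension of f -/

/-- `g : [0,1]^d → [0,1]^d` is an `L`-bi-Lipschitz bijection of the unit cube, equal to the
identity on the boundary, mapping `I = (1-2/M)[0,1]^d` homothetically onto `(1-2/M)Q_η`. -/
def GSpec (d M K : ℕ) (lab : Fin (M ^ d) → Fin d → Fin M) (e : List (Fin (M ^ d)))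
    (L : ℝ) (g : (Fin d → ℝ) → (Fin d → ℝ)) : Prop :=
  Set.BijOn g (cube d M lab ([])) (cube d M lab ([])) ∧
    (∀ x ∈ cube d M lab ([]), ∀ y ∈ cube d M lab ([]),
      L⁻¹ * dist x y ≤ dist (g x) (g y) ∧ dist (g x) (g y) ≤ L * dist x y) ∧
    (∀ x ∈ frontier (cube d M lab ([] : List (Fin (M ^ d)))), g x = x) ∧
    (∃ v : Fin d → ℝ,
      ∀ x ∈ concCube d (fun _ => (0 : ℝ)) 1 (1 - 2 / (M : ℝ)),
        g x = ((M : ℝ) ^ K)⁻¹ • x + v) ∧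
    g '' concCube d (fun _ => (0 : ℝ)) 1 (1 - 2 / (M : ℝ)) =
      concCube d (corner d M lab e) (((M : ℝ) ^ K)⁻¹) (1 - 2 / (M : ℝ))

/-- `F` is (the coding of) the extension of the substitution map to `[0,1]^d`:
on surviving words it is the substitution map, and on a word whose largest surviving
prefix is `𝚒|_n` it is given by the two cases of the definition in the paper. -/
def ExtMapSpec (d M : ℕ) (lab : Fin (M ^ d) → Fin d → Fin M) {Ω : Type*}
    (X : List (Fin (M ^ d)) → Ω → Bool) (e : List (Fin (M ^ d)))
    (g : (Fin d → ℝ) → (Fin d → ℝ)) (ω : Ω)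
    (F : (ℕ → Fin (M ^ d)) → (Fin d → ℝ)) : Prop :=
  (∀ i, TInf d M X ω i → F i = PiTilde d M lab X e ω i) ∧
    ∀ (i : ℕ → Fin (M ^ d)) (n : ℕ),
      Alive d M X ω (wordTake d M i n) → ¬ Alive d M X ω (wordTake d M i (n + 1)) →
        ((∃ j ∈ LamB d M, Alive d M X ω (wordTake d M i n ++ [j])) →
          F i = hQ d M lab (substW d M X e ω (wordTake d M i n))
              (PiInf d M lab (shiftW d M n i))) ∧
        ((∀ j ∈ LamB d M, ¬ Alive d M X ω (wordTake d M i n ++ [j])) →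
          F i = hQ d M lab (substW d M X e ω (wordTake d M i n))
              (g (PiInf d M lab (shiftW d M n i))))


/-! ### Auxiliary lemmas -/

section Aux

variable {d M : ℕ}

lemma wordTake_zero (i : ℕ → Fin (M ^ d)) : wordTake d M i 0 = [] := by
  simp [wordTake]

lemma length_wordTake (i : ℕ → Fin (M ^ d)) (n : ℕ) : (wordTake d M i n).length = n := by
  simp [wordTake]

lemma wordTake_succ (i : ℕ → Fin (M ^ d)) (n : ℕ) :
    wordTake d M i (n + 1) = wordTake d M i n ++ [i n] := by
  rw [wordTake, List.ofFn_succ']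
  simp [wordTake, Fin.last, List.concat_eq_append]

lemma wordTake_add (i : ℕ → Fin (M ^ d)) (m t : ℕ) :
    wordTake d M i (m + t) = wordTake d M i m ++ wordTake d M (shiftW d M m i) t := by
  induction t with
  | zero => simp [wordTake_zero]
  | succ t ih =>
      have : m + (t + 1) = (m + t) + 1 := rfl
      rw [this, wordTake_succ, ih, wordTake_succ, List.append_assoc]
      rfl


variable {lab : Fin (M ^ d) → Fin d → Fin M}

lemma corner_nil (k : Fin d) : corner d M lab ([]) k = 0 := rfl

lemma corner_cons (a : Fin (M ^ d)) (w : List (Fin (M ^ d))) (k : Fin d) :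
    corner d M lab (a :: w) k = ((lab a k : ℝ) + corner d M lab w k) / (M : ℝ) := rfl

lemma corner_nonneg (hM : 3 ≤ M) (w : List (Fin (M ^ d))) (k : Fin d) :
    0 ≤ corner d M lab w k := by
  induction w with
  | nil => simp [corner_nil]
  | cons a w ih =>
      rw [corner_cons]
      have hM0 : (0:ℝ) < M := by exact_mod_cast Nat.lt_of_lt_of_le (by norm_num) hM
      positivity

lemma corner_add_le_one (hM : 3 ≤ M) (w : List (Fin (M ^ d))) (k : Fin d) :
    corner d M lab w k + ((M : ℝ) ^ w.length)⁻¹ ≤ 1 := by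
  have hM0 : (0:ℝ) < M := by exact_mod_cast Nat.lt_of_lt_of_le (by norm_num) hM
  induction w with
  | nil => simp [corner_nil]
  | cons a w ih =>
      rw [corner_cons]
      have hla : (lab a k : ℝ) ≤ (M : ℝ) - 1 := by
        have := (lab a k).is_lt
        have : ((lab a k : ℕ) : ℝ) ≤ (M : ℝ) - 1 := by
          have h1 : (lab a k : ℕ) + 1 ≤ M := (lab a k).is_lt
          have : ((lab a k : ℕ) : ℝ) + 1 ≤ (M : ℝ) := by exact_mod_cast h1
          linarith
        exact_mod_cast this
      have hpow : ((M : ℝ) ^ (a :: w).length)⁻¹ = ((M : ℝ) ^ w.length)⁻¹ / M := by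
        rw [List.length_cons, pow_succ, mul_inv, div_eq_mul_inv]
      rw [hpow]
      rw [← add_div, div_le_one hM0]
      linarith

lemma corner_le_one (hM : 3 ≤ M) (w : List (Fin (M ^ d))) (k : Fin d) :
    corner d M lab w k ≤ 1 := by
  have h := corner_add_le_one (lab := lab) hM w k
  have : (0:ℝ) < ((M : ℝ) ^ w.length)⁻¹ := by
    have hM0 : (0:ℝ) < M := by exact_mod_cast Nat.lt_of_lt_of_le (by norm_num) hM
    positivity
  linarith

lemma corner_append (hM : 3 ≤ M) (u v : List (Fin (M ^ d))) (k : Fin d) :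
    corner d M lab (u ++ v) k
      = corner d M lab u k + ((M : ℝ) ^ u.length)⁻¹ * corner d M lab v k := by
  induction u with
  | nil => simp [corner_nil]
  | cons a u ih =>
      rw [List.cons_append, corner_cons, corner_cons, ih]
      have : ((M : ℝ) ^ (a :: u).length)⁻¹ = ((M : ℝ) ^ u.length)⁻¹ / M := by
        rw [List.length_cons, pow_succ, mul_inv, div_eq_mul_inv]
      rw [this]
      ring

lemma corner_le_of_prefix (hM : 3 ≤ M) {u v : List (Fin (M ^ d))} (h : u <+: v) (k : Fin d) :
    corner d M lab u k ≤ corner d M lab v k := by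
  obtain ⟨t, rfl⟩ := h
  rw [corner_append hM]
  have hM0 : (0:ℝ) < M := by exact_mod_cast Nat.lt_of_lt_of_le (by norm_num) hM
  have := corner_nonneg (lab := lab) hM t k
  have : (0:ℝ) ≤ ((M : ℝ) ^ u.length)⁻¹ * corner d M lab t k := by positivity
  linarith

lemma corner_add_inv_le_of_prefix (hM : 3 ≤ M) {u v : List (Fin (M ^ d))} (h : u <+: v)
    (k : Fin d) :
    corner d M lab v k + ((M : ℝ) ^ v.length)⁻¹
      ≤ corner d M lab u k + ((M : ℝ) ^ u.length)⁻¹ := by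
  obtain ⟨t, rfl⟩ := h
  rw [corner_append hM, List.length_append, pow_add, mul_inv]
  have hM0 : (0:ℝ) < M := by exact_mod_cast Nat.lt_of_lt_of_le (by norm_num) hM
  have h1 := corner_add_le_one (lab := lab) hM t k
  have h2 : (0:ℝ) < ((M : ℝ) ^ u.length)⁻¹ := by positivity
  nlinarith [corner_nonneg (lab := lab) hM t k]


/-- A sequence of words each of which is obtained from the previous one by appending. -/
def AppendChain (g : ℕ → List (Fin (M ^ d))) : Prop := ∀ N, ∃ t, g (N + 1) = g N ++ t

lemma AppendChain.prefix {g : ℕ → List (Fin (M ^ d))} (hg : AppendChain g)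
    {m N : ℕ} (h : m ≤ N) : g m <+: g N := by
  induction N, h using Nat.le_induction with
  | base => exact List.prefix_refl _
  | succ N hmN ih =>
      obtain ⟨t, ht⟩ := hg N
      rw [ht]
      exact ih.trans (List.prefix_append _ _)

lemma bddAbove_corner (hM : 3 ≤ M) (h : ℕ → List (Fin (M ^ d))) (k : Fin d) :
    BddAbove (Set.range fun N => corner d M lab (h N) k) := by
  refine ⟨1, ?_⟩
  rintro x ⟨N, rfl⟩
  exact corner_le_one hM _ k

lemma monotone_corner_chain (hM : 3 ≤ M) {g : ℕ → List (Fin (M ^ d))} (hg : AppendChain g)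
    (k : Fin d) : Monotone fun N => corner d M lab (g N) k :=
  fun _ _ h => corner_le_of_prefix hM (hg.prefix h) k

lemma sup_mem_cube (hM : 3 ≤ M) {g : ℕ → List (Fin (M ^ d))} (hg : AppendChain g) (m : ℕ) :
    (fun k => ⨆ N, corner d M lab (g N) k) ∈ cube d M lab (g m) := by
  intro k
  constructor
  · exact le_ciSup (bddAbove_corner hM g k) m
  · refine ciSup_le fun N => ?_
    rcases le_total N m with h | h
    · have h1 := corner_le_of_prefix (lab := lab) hM (hg.prefix h) k
      have h2 : (0:ℝ) ≤ ((M : ℝ) ^ (g m).length)⁻¹ := by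
        have hM0 : (0:ℝ) < M := by exact_mod_cast Nat.lt_of_lt_of_le (by norm_num) hM
        positivity
      linarith
    · have h1 := corner_add_inv_le_of_prefix (lab := lab) hM (hg.prefix h) k
      have h2 : (0:ℝ) ≤ ((M : ℝ) ^ (g N).length)⁻¹ := by
        have hM0 : (0:ℝ) < M := by exact_mod_cast Nat.lt_of_lt_of_le (by norm_num) hM
        positivity
      linarith

lemma decomp (hM : 3 ≤ M) {g h : ℕ → List (Fin (M ^ d))} {P : List (Fin (M ^ d))} {m : ℕ}
    (hg : AppendChain g) (H : ∀ N, g (m + N) = P ++ h N) :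
    (fun k => ⨆ N, corner d M lab (g N) k)
      = fun k => corner d M lab P k + ((M : ℝ) ^ P.length)⁻¹ * ⨆ N, corner d M lab (h N) k := by
  have hM0 : (0:ℝ) < M := by exact_mod_cast Nat.lt_of_lt_of_le (by norm_num) hM
  funext k
  have hr : (0:ℝ) ≤ ((M : ℝ) ^ P.length)⁻¹ := by positivity
  have step1 : (⨆ N, corner d M lab (g N) k) = ⨆ N, corner d M lab (g (m + N)) k := by
    apply le_antisymm
    · refine ciSup_le fun N => ?_
      refine le_trans (monotone_corner_chain hM hg k (Nat.le_add_left N m)) ?_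
      have hb2 : BddAbove (Set.range fun N => corner d M lab (g (m + N)) k) := by
        refine ⟨1, ?_⟩
        rintro x ⟨N, rfl⟩
        exact corner_le_one hM _ k
      exact le_ciSup hb2 N
    · refine ciSup_le fun N => ?_
      exact le_ciSup (bddAbove_corner hM g k) (m + N)
  rw [step1]
  have step2 : ∀ N, corner d M lab (g (m + N)) k
      = corner d M lab P k + ((M : ℝ) ^ P.length)⁻¹ * corner d M lab (h N) k := by
    intro N
    rw [H N, corner_append hM]
  simp only [step2]
  have cont : ContinuousAt (fun x : ℝ => corner d M lab P k + ((M : ℝ) ^ P.length)⁻¹ * x)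
      (⨆ N, corner d M lab (h N) k) := by fun_prop
  have mono : Monotone (fun x : ℝ => corner d M lab P k + ((M : ℝ) ^ P.length)⁻¹ * x) :=
    fun x y hxy => by nlinarith
  exact (Monotone.map_ciSup_of_continuousAt cont mono (bddAbove_corner hM h k)).symm

lemma cube_antitone (hM : 3 ≤ M) {u v : List (Fin (M ^ d))} (h : u <+: v) :
    cube d M lab v ⊆ cube d M lab u := by
  intro x hx k
  obtain ⟨h1, h2⟩ := hx k
  exact ⟨le_trans (corner_le_of_prefix hM h k) h1,
    le_trans h2 (corner_add_inv_le_of_prefix hM h k)⟩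

lemma dist_affine (c x y : Fin d → ℝ) {r : ℝ} (hr : 0 ≤ r) :
    dist (fun k => c k + r * x k) (fun k => c k + r * y k) = r * dist x y := by
  have hx : (fun k => c k + r * x k) = c + r • x := rfl
  have hy : (fun k => c k + r * y k) = c + r • y := rfl
  rw [hx, hy, dist_add_left, dist_smul₀, Real.norm_eq_abs, abs_of_nonneg hr]

lemma dist_le_of_mem_cube (hM : 3 ≤ M) {u : List (Fin (M ^ d))} {x y : Fin d → ℝ}
    (hx : x ∈ cube d M lab u) (hy : y ∈ cube d M lab u) :
    dist x y ≤ ((M : ℝ) ^ u.length)⁻¹ := by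
  have hM0 : (0:ℝ) < M := by exact_mod_cast Nat.lt_of_lt_of_le (by norm_num) hM
  have hr : (0:ℝ) ≤ ((M : ℝ) ^ u.length)⁻¹ := by positivity
  rw [dist_pi_le_iff hr]
  intro k
  obtain ⟨hx1, hx2⟩ := hx k
  obtain ⟨hy1, hy2⟩ := hy k
  rw [Real.dist_eq, abs_sub_le_iff]
  constructor <;> linarith


lemma corner_sep (hM : 3 ≤ M) (hinj : Function.Injective lab) :
    ∀ (u v : List (Fin (M ^ d))), u.length = v.length → u ≠ v →
      ∃ k, ((M : ℝ) ^ u.length)⁻¹ ≤ |corner d M lab u k - corner d M lab v k| := by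
  have hM0 : (0:ℝ) < M := by exact_mod_cast Nat.lt_of_lt_of_le (by norm_num) hM
  intro u
  induction u with
  | nil =>
      intro v hlen hne
      exact absurd (List.length_eq_zero_iff.mp hlen.symm).symm hne
  | cons a u ih =>
      intro v hlen hne
      match v with
      | [] => simp at hlen
      | b :: v =>
          simp only [List.length_cons, Nat.add_right_cancel_iff] at hlen
          by_cases hab : a = b
          · subst hab
            have huv : u ≠ v := fun h => hne (by rw [h])
            obtain ⟨k, hk⟩ := ih v hlen huv
            refine ⟨k, ?_⟩
            rw [corner_cons, corner_cons, div_sub_div_same, abs_div, abs_of_pos hM0,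
              List.length_cons, pow_succ]
            rw [mul_inv]
            have : |(↑↑(lab a k) : ℝ) + corner d M lab u k - (↑↑(lab a k) + corner d M lab v k)|
                = |corner d M lab u k - corner d M lab v k| := by ring_nf
            rw [this]
            rw [div_eq_mul_inv]
            exact mul_le_mul_of_nonneg_right hk (by positivity)
          · have hlabne : lab a ≠ lab b := fun h => hab (hinj h)
            have : ∃ k, lab a k ≠ lab b k := by
              by_contra hcon
              push_neg at hcon
              exact hlabne (funext hcon)
            obtain ⟨k, hk⟩ := this
            refine ⟨k, ?_⟩
            have h1 : (1:ℝ) ≤ |(↑↑(lab a k) : ℝ) - ↑↑(lab b k)| := by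
              have : (lab a k : ℕ) ≠ (lab b k : ℕ) := fun h => hk (Fin.val_injective h)
              have := this.lt_or_gt
              rcases this with h | h
              · rw [abs_sub_comm]
                rw [le_abs]
                left
                have : (lab a k : ℕ) + 1 ≤ (lab b k : ℕ) := h
                have : ((lab a k : ℕ) : ℝ) + 1 ≤ ((lab b k : ℕ) : ℝ) := by exact_mod_cast this
                linarith
              · rw [le_abs]
                left
                have : (lab b k : ℕ) + 1 ≤ (lab a k : ℕ) := h
                have : ((lab b k : ℕ) : ℝ) + 1 ≤ ((lab a k : ℕ) : ℝ) := by exact_mod_cast this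
                linarith
            have h2 : |corner d M lab u k - corner d M lab v k| ≤ 1 - ((M:ℝ) ^ u.length)⁻¹ := by
              have hu1 := corner_add_le_one (lab := lab) hM u k
              have hv1 := corner_add_le_one (lab := lab) hM v k
              have hu0 := corner_nonneg (lab := lab) hM u k
              have hv0 := corner_nonneg (lab := lab) hM v k
              rw [abs_sub_le_iff]
              rw [hlen] at hu1 ⊢
              constructor <;> linarith
            rw [corner_cons, corner_cons, div_sub_div_same, abs_div, abs_of_pos hM0,
              List.length_cons, pow_succ, mul_inv, div_eq_mul_inv]
            have key : ((M:ℝ) ^ u.length)⁻¹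
                ≤ |↑↑(lab a k) + corner d M lab u k - (↑↑(lab b k) + corner d M lab v k)| := by
              have : |(↑↑(lab a k) : ℝ) - ↑↑(lab b k)|
                  - |corner d M lab u k - corner d M lab v k|
                  ≤ |↑↑(lab a k) + corner d M lab u k - (↑↑(lab b k) + corner d M lab v k)| := by
                have habs := abs_sub_abs_le_abs_sub ((↑↑(lab a k) : ℝ) - ↑↑(lab b k))
                  (-(corner d M lab u k - corner d M lab v k))
                have : (↑↑(lab a k) : ℝ) - ↑↑(lab b k) - -(corner d M lab u k - corner d M lab v k)
                    = ↑↑(lab a k) + corner d M lab u k - (↑↑(lab b k) + corner d M lab v k) := by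
                  ring
                rw [this, abs_neg] at habs
                linarith
              linarith
            exact mul_le_mul_of_nonneg_right key (by positivity)

lemma notLamB_bounds (hM : 3 ≤ M) (hlab : LabSpec d M lab) {s : Fin (M ^ d)}
    (hs : s ∉ LamB d M) (k : Fin d) :
    (1:ℝ) ≤ ((lab s k : ℕ) : ℝ) ∧ ((lab s k : ℕ) : ℝ) ≤ (M : ℝ) - 2 := by
  have h : ¬ ∃ k, (lab s k : ℕ) = 0 ∨ (lab s k : ℕ) = M - 1 :=
    fun hh => hs ((hlab.2 s).mpr hh)
  push_neg at h
  obtain ⟨h0, h1⟩ := h k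
  have hlt : (lab s k : ℕ) < M := (lab s k).is_lt
  have hge : 1 ≤ (lab s k : ℕ) := Nat.one_le_iff_ne_zero.mpr h0
  have hle : (lab s k : ℕ) ≤ M - 2 := by omega
  constructor
  · exact_mod_cast hge
  · have hc : ((lab s k : ℕ):ℝ) ≤ ((M - 2 : ℕ):ℝ) := by exact_mod_cast hle
    have h2 : ((M - 2 : ℕ):ℝ) = (M:ℝ) - 2 := by
      have h3 : (2:ℕ) ≤ M := by omega
      rw [Nat.cast_sub h3]
      norm_num
    linarith

lemma sep (hM : 3 ≤ M) (hlab : LabSpec d M lab) {u v : List (Fin (M ^ d))} {s : Fin (M ^ d)}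
    (hlen : v.length = u.length) (hne : u ≠ v) (hs : s ∉ LamB d M) {x y : Fin d → ℝ}
    (hx : x ∈ cube d M lab (u ++ [s])) (hy : y ∈ cube d M lab v) :
    ((M : ℝ) ^ (u.length + 1))⁻¹ ≤ dist x y := by
  have hM0 : (0:ℝ) < M := by exact_mod_cast Nat.lt_of_lt_of_le (by norm_num) hM
  obtain ⟨k, hk⟩ := corner_sep hM hlab.1.injective u v hlen.symm hne
  set m := u.length with hm
  set r : ℝ := ((M:ℝ) ^ m)⁻¹ with hr
  have hrpos : 0 < r := by positivity
  have hr1 : ((M:ℝ) ^ (m + 1))⁻¹ = r / M := by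
    rw [hr, pow_succ, mul_inv, div_eq_mul_inv]
  have hlabk := notLamB_bounds hM hlab hs k
  obtain ⟨hx1, hx2⟩ := hx k
  obtain ⟨hy1, hy2⟩ := hy k
  have hcx : corner d M lab (u ++ [s]) k
      = corner d M lab u k + r * (((lab s k : ℕ):ℝ) / M) := by
    rw [corner_append hM, ← hm, ← hr]
    congr 1
    rw [corner_cons, corner_nil, add_zero]
  have hlenx : ((M:ℝ) ^ (u ++ [s]).length)⁻¹ = r / M := by
    rw [List.length_append, List.length_singleton, ← hm, ← hr1, hr1]
  rw [hcx] at hx1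
  rw [hlenx, hcx] at hx2
  -- x k ∈ [corner u k + r/M, corner u k + r - r/M]
  have hMne : (M:ℝ) ≠ 0 := ne_of_gt hM0
  have hxlo : corner d M lab u k + r / M ≤ x k := by
    have h1 : r * (1 / M) ≤ r * (((lab s k : ℕ):ℝ) / M) := by
      apply mul_le_mul_of_nonneg_left _ hrpos.le
      exact (div_le_div_iff_of_pos_right hM0).mpr hlabk.1
    have h2 : r * (1 / (M:ℝ)) = r / M := by ring
    linarith [hx1]
  have hxhi : x k ≤ corner d M lab u k + r - r / M := by
    have h1 : r * (((lab s k : ℕ):ℝ) / M) ≤ r * (((M:ℝ) - 2) / M) := by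
      apply mul_le_mul_of_nonneg_left _ hrpos.le
      exact (div_le_div_iff_of_pos_right hM0).mpr hlabk.2
    have h2 : r * (((M:ℝ) - 2) / M) + r / M = r - r / M := by
      field_simp
      ring
    linarith [hx2]
  rw [hlen] at hy2
  rw [hr1]
  have hco := dist_le_pi_dist x y k
  refine le_trans ?_ hco
  rw [Real.dist_eq, le_abs]
  rw [le_abs] at hk
  rcases hk with hk | hk
  · left; linarith
  · right; linarith


lemma dist_dist_le (hM : 3 ≤ M) {u v : List (Fin (M ^ d))} (hlen : v.length = u.length)
    {x y x' y' : Fin d → ℝ} (hx : x ∈ cube d M lab u) (hx' : x' ∈ cube d M lab u)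
    (hy : y ∈ cube d M lab v) (hy' : y' ∈ cube d M lab v) :
    dist x' y' ≤ dist x y + 2 * ((M : ℝ) ^ u.length)⁻¹ := by
  have h1 : dist x' y' ≤ dist x' x + dist x y + dist y y' := dist_triangle4 x' x y y'
  have h2 : dist x' x ≤ ((M : ℝ) ^ u.length)⁻¹ := dist_le_of_mem_cube hM hx' hx
  have h3 : dist y y' ≤ ((M : ℝ) ^ u.length)⁻¹ := by
    have := dist_le_of_mem_cube hM hy hy'
    rwa [hlen] at this
  linarith

section Subst

variable {Ω : Type*} {X : List (Fin (M ^ d)) → Ω → Bool} {e : List (Fin (M ^ d))} {ω : Ω}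

lemma substAux_nil (pfx : List (Fin (M ^ d))) : substAux d M X e ω pfx ([]) = ([]) := rfl

lemma substAux_cons (pfx : List (Fin (M ^ d))) (a : Fin (M ^ d)) (l : List (Fin (M ^ d))) :
    substAux d M X e ω pfx (a :: l)
      = (if BdryDead d M X ω pfx then e ++ [a] else [a]) ++ substAux d M X e ω (pfx ++ [a]) l :=
  rfl

lemma substAux_append (pfx l₁ l₂ : List (Fin (M ^ d))) :
    substAux d M X e ω pfx (l₁ ++ l₂)
      = substAux d M X e ω pfx l₁ ++ substAux d M X e ω (pfx ++ l₁) l₂ := by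
  induction l₁ generalizing pfx with
  | nil => simp [substAux_nil]
  | cons a l₁ ih =>
      rw [List.cons_append, substAux_cons, substAux_cons, ih (pfx ++ [a]), List.append_assoc]
      simp

lemma substAux_eq_self (pfx : List (Fin (M ^ d))) (l : List (Fin (M ^ d)))
    (h : ∀ l' : List (Fin (M ^ d)), l' <+: l → l' ≠ l → ¬ BdryDead d M X ω (pfx ++ l')) :
    substAux d M X e ω pfx l = l := by
  induction l generalizing pfx with
  | nil => rfl
  | cons a l ih =>
      rw [substAux_cons]
      have h0 : ¬ BdryDead d M X ω pfx := by
        have := h [] (List.nil_prefix) (by simp)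
        simpa using this
      rw [if_neg h0, ih (pfx ++ [a]) ?_]
      · simp
      · intro l' hp hne
        have hne2 : a :: l' ≠ a :: l := by
          intro hc
          exact hne (by injection hc)
        have hh := h (a :: l') (List.cons_prefix_cons.mpr ⟨rfl, hp⟩) hne2
        have heq : pfx ++ (a :: l') = pfx ++ [a] ++ l' := by simp
        rwa [heq] at hh

end Subst


lemma shift_shift (n : ℕ) (i : ℕ → Fin (M ^ d)) :
    shiftW d M 1 (shiftW d M n i) = shiftW d M (n + 1) i :=
  funext fun t => congrArg i (by omega)

lemma wordTake_one (i : ℕ → Fin (M ^ d)) : wordTake d M i 1 = [i 0] := by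
  simp [wordTake]

lemma prefix_wordTake {i : ℕ → Fin (M ^ d)} {N : ℕ} {l' : List (Fin (M ^ d))}
    (h : l' <+: wordTake d M i N) : l' = wordTake d M i l'.length := by
  have hlen : l'.length ≤ N := by
    have := h.length_le
    simpa [length_wordTake] using this
  obtain ⟨t, ht⟩ := h
  have hsplit : wordTake d M i N
      = wordTake d M i l'.length ++ wordTake d M (shiftW d M l'.length i) (N - l'.length) := by
    rw [← wordTake_add]
    congr 1
    omega
  rw [hsplit] at ht
  exact List.append_inj_left ht (by rw [length_wordTake])

lemma chain_wordTake (i : ℕ → Fin (M ^ d)) : AppendChain (fun N => wordTake d M i N) :=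
  fun N => ⟨[i N], wordTake_succ i N⟩

section Subst2

variable {Ω : Type*} {X : List (Fin (M ^ d)) → Ω → Bool} {e : List (Fin (M ^ d))} {ω : Ω}

lemma chain_subst (pfx : List (Fin (M ^ d))) (i : ℕ → Fin (M ^ d)) :
    AppendChain (fun N => substAux d M X e ω pfx (wordTake d M i N)) := by
  intro N
  refine ⟨substAux d M X e ω (pfx ++ wordTake d M i N) ([i N]), ?_⟩
  simp only
  rw [wordTake_succ, substAux_append]

lemma chain_cons_subst (c : List (Fin (M ^ d))) {g : ℕ → List (Fin (M ^ d))}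
    (hg : AppendChain g) : AppendChain (fun N => c ++ g N) := by
  intro N
  obtain ⟨t, ht⟩ := hg N
  exact ⟨t, by simp only; rw [ht, List.append_assoc]⟩

lemma alive_of_tinf {i : ℕ → Fin (M ^ d)} (hi : TInf d M X ω i) (n : ℕ) :
    Alive d M X ω (wordTake d M i n) := hi n

lemma notLamB_of_bdryDead {i : ℕ → Fin (M ^ d)} (hi : TInf d M X ω i) {m : ℕ}
    (hB : BdryDead d M X ω (wordTake d M i m)) : i m ∉ LamB d M := by
  intro hmem
  refine hB (i m) hmem ?_
  rw [← wordTake_succ]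
  exact hi (m + 1)

end Subst2

lemma ciSup_corner_shift (hM : 3 ≤ M) {g : ℕ → List (Fin (M ^ d))} (hg : AppendChain g)
    (m : ℕ) (k : Fin d) :
    (⨆ N, corner d M lab (g N) k) = ⨆ N, corner d M lab (g (m + N)) k := by
  apply le_antisymm
  · refine ciSup_le fun N => ?_
    refine le_trans (monotone_corner_chain hM hg k (Nat.le_add_left N m)) ?_
    have hb2 : BddAbove (Set.range fun N => corner d M lab (g (m + N)) k) := by
      refine ⟨1, ?_⟩
      rintro x ⟨N, rfl⟩
      exact corner_le_one hM _ k
    exact le_ciSup hb2 N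
  · refine ciSup_le fun N => ?_
    exact le_ciSup (bddAbove_corner hM g k) (m + N)


section Tail

variable {Ω : Type*} {X : List (Fin (M ^ d)) → Ω → Bool} {e : List (Fin (M ^ d))} {ω : Ω}

lemma wordTake_shift_succ (i : ℕ → Fin (M ^ d)) (n N : ℕ) :
    wordTake d M (shiftW d M n i) (N + 1)
      = [i n] ++ wordTake d M (shiftW d M (n + 1) i) N := by
  rw [show N + 1 = 1 + N by omega, wordTake_add, wordTake_one, shift_shift]
  rfl

/-- The word list whose supremum is the "suffix tilde point" skipping the level-`n`
substitution. -/
def tailSeq (X : List (Fin (M ^ d)) → Ω → Bool) (e : List (Fin (M ^ d))) (ω : Ω)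
    (n : ℕ) (i : ℕ → Fin (M ^ d)) (N : ℕ) : List (Fin (M ^ d)) :=
  [i n] ++ substAux d M X e ω (wordTake d M i (n + 1)) (wordTake d M (shiftW d M (n + 1) i) N)

/-- The "suffix tilde point" skipping the level-`n` substitution. -/
def tailPoint (lab : Fin (M ^ d) → Fin d → Fin M) (X : List (Fin (M ^ d)) → Ω → Bool)
    (e : List (Fin (M ^ d))) (ω : Ω) (n : ℕ) (i : ℕ → Fin (M ^ d)) : Fin d → ℝ :=
  fun k => ⨆ N, corner d M lab (tailSeq X e ω n i N) k

lemma chain_tailSeq (n : ℕ) (i : ℕ → Fin (M ^ d)) : AppendChain (tailSeq X e ω n i) :=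
  chain_cons_subst _ (chain_subst _ _)

lemma tailSeq_plain {i : ℕ → Fin (M ^ d)} {n N : ℕ}
    (hmin : ∀ m < N, ¬ BdryDead d M X ω (wordTake d M i (n + 1 + m))) :
    tailSeq X e ω n i N = wordTake d M (shiftW d M n i) (N + 1) := by
  rw [tailSeq, substAux_eq_self, ← wordTake_shift_succ]
  intro l' hp hne
  have hl' := prefix_wordTake hp
  have hlen : l'.length < N := by
    have h1 : l'.length ≤ N := by
      have := hp.length_le
      simpa [length_wordTake] using this
    rcases h1.lt_or_eq with h | h
    · exact h
    · exfalso
      apply hne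
      rw [hl', h]
  rw [hl', ← wordTake_add]
  exact hmin l'.length hlen

lemma tailSeq_subst {i : ℕ → Fin (M ^ d)} {n q₀ : ℕ}
    (hq : BdryDead d M X ω (wordTake d M i (n + 1 + q₀)))
    (hmin : ∀ m < q₀, ¬ BdryDead d M X ω (wordTake d M i (n + 1 + m))) :
    tailSeq X e ω n i (q₀ + 1)
      = wordTake d M (shiftW d M n i) (q₀ + 1) ++ e ++ [i (n + 1 + q₀)] := by
  have hsplit : wordTake d M (shiftW d M (n + 1) i) (q₀ + 1)
      = wordTake d M (shiftW d M (n + 1) i) q₀ ++ [i (n + 1 + q₀)] := wordTake_succ _ _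
  rw [tailSeq, hsplit, substAux_append]
  have h1 : substAux d M X e ω (wordTake d M i (n + 1))
      (wordTake d M (shiftW d M (n + 1) i) q₀) = wordTake d M (shiftW d M (n + 1) i) q₀ := by
    apply substAux_eq_self
    intro l' hp hne
    have hl' := prefix_wordTake hp
    have hlen : l'.length < q₀ := by
      have h1 : l'.length ≤ q₀ := by
        have := hp.length_le
        simpa [length_wordTake] using this
      rcases h1.lt_or_eq with h | h
      · exact h
      · exfalso; apply hne; rw [hl', h]
    rw [hl', ← wordTake_add]
    exact hmin l'.length hlen
  have h2 : wordTake d M i (n + 1) ++ wordTake d M (shiftW d M (n + 1) i) q₀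
      = wordTake d M i (n + 1 + q₀) := (wordTake_add i (n + 1) q₀).symm
  rw [h1, h2, substAux_cons, if_pos hq, substAux_nil, wordTake_shift_succ]
  simp

end Tail


section Core

variable {Ω : Type*} {X : List (Fin (M ^ d)) → Ω → Bool} {e : List (Fin (M ^ d))} {ω : Ω}

lemma coreAux (hM : 3 ≤ M) (hlab : LabSpec d M lab) {K : ℕ} (he : EtaSpec d M K e)
    {i j : ℕ → Fin (M ^ d)} {n q₀ : ℕ}
    (hi : TInf d M X ω i) (hne : i n ≠ j n)
    (hq : BdryDead d M X ω (wordTake d M i (n + 1 + q₀)))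
    (hmin : ∀ m < q₀, ¬ BdryDead d M X ω (wordTake d M i (n + 1 + m)) ∧
      ¬ BdryDead d M X ω (wordTake d M j (n + 1 + m))) :
    dist (tailPoint lab X e ω n i) (tailPoint lab X e ω n j)
        ≤ (2 * (M:ℝ) + 1) * dist (PiInf d M lab (shiftW d M n i)) (PiInf d M lab (shiftW d M n j))
      ∧ dist (PiInf d M lab (shiftW d M n i)) (PiInf d M lab (shiftW d M n j))
        ≤ (2 * (M:ℝ) + 1) *
          dist (tailPoint lab X e ω n i) (tailPoint lab X e ω n j) := by
  have hM0 : (0:ℝ) < M := by exact_mod_cast Nat.lt_of_lt_of_le (by norm_num) hM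
  obtain ⟨hK1, heK, a, l, hea, haB⟩ := he
  set q₁ := q₀ + 1 with hq₁
  set u := wordTake d M (shiftW d M n i) q₁ with hu
  set v := wordTake d M (shiftW d M n j) q₁ with hv
  set x := PiInf d M lab (shiftW d M n i) with hxdef
  set y := PiInf d M lab (shiftW d M n j) with hydef
  set A := tailPoint lab X e ω n i with hAdef
  set B := tailPoint lab X e ω n j with hBdef
  have hul : u.length = q₁ := length_wordTake _ _
  have hvl : v.length = q₁ := length_wordTake _ _
  have hx : x ∈ cube d M lab (u ++ [i (n + q₁)]) := by
    have h0 := sup_mem_cube (lab := lab) hM (chain_wordTake (shiftW d M n i)) (q₁ + 1)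
    rw [wordTake_succ] at h0
    exact h0
  have hinner_i : i (n + q₁) ∉ LamB d M := by
    have h0 := notLamB_of_bdryDead hi hq
    have h1 : i (n + 1 + q₀) = i (n + q₁) := congrArg i (by omega)
    rwa [h1] at h0
  have hy : y ∈ cube d M lab v := sup_mem_cube hM (chain_wordTake _) q₁
  have hAcube := sup_mem_cube (lab := lab) hM (chain_tailSeq (X := X) (e := e) (ω := ω) n i) q₁
  have htsi : tailSeq X e ω n i q₁ = u ++ e ++ [i (n + 1 + q₀)] :=
    tailSeq_subst hq (fun m hm => (hmin m hm).1)
  have hA : A ∈ cube d M lab (u ++ [a]) := by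
    refine cube_antitone hM ?_ (htsi ▸ hAcube)
    refine ⟨l ++ [i (n + 1 + q₀)], ?_⟩
    rw [hea]
    simp
  have hB : B ∈ cube d M lab v := by
    have h0 := sup_mem_cube (lab := lab) hM (chain_tailSeq (X := X) (e := e) (ω := ω) n j) q₀
    rwa [tailSeq_plain (fun m hm => (hmin m hm).2)] at h0
  have huv : u ≠ v := by
    intro h
    apply hne
    have := List.ofFn_injective (hu.symm.trans (h.trans hv))
    exact congrFun this ⟨0, by omega⟩
  have hsep1 : ((M:ℝ) ^ (q₁ + 1))⁻¹ ≤ dist x y := by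
    have h0 := sep hM hlab (hvl.trans hul.symm) huv hinner_i hx hy
    rwa [hul] at h0
  have hsep2 : ((M:ℝ) ^ (q₁ + 1))⁻¹ ≤ dist A B := by
    have h0 := sep hM hlab (hvl.trans hul.symm) huv haB hA hB
    rwa [hul] at h0
  have hxu : x ∈ cube d M lab u := cube_antitone hM (List.prefix_append _ _) hx
  have hAu : A ∈ cube d M lab u := cube_antitone hM (List.prefix_append _ _) hA
  have h1 : dist A B ≤ dist x y + 2 * ((M:ℝ) ^ q₁)⁻¹ := by
    have h0 := dist_dist_le hM (hvl.trans hul.symm) hxu hAu hy hB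
    rwa [hul] at h0
  have h2 : dist x y ≤ dist A B + 2 * ((M:ℝ) ^ q₁)⁻¹ := by
    have h0 := dist_dist_le hM (hvl.trans hul.symm) hAu hxu hB hy
    rwa [hul] at h0
  have hpow : ((M:ℝ) ^ q₁)⁻¹ = M * ((M:ℝ) ^ (q₁ + 1))⁻¹ := by
    have hps : ((M:ℝ) ^ (q₁ + 1)) = M * (M:ℝ) ^ q₁ := by rw [pow_succ]; ring
    rw [hps, mul_inv, ← mul_assoc, mul_inv_cancel₀ (ne_of_gt hM0), one_mul]
  constructor
  · nlinarith [hsep1, hM0]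
  · nlinarith [hsep2, hM0]


lemma core (hM : 3 ≤ M) (hlab : LabSpec d M lab) {K : ℕ} (he : EtaSpec d M K e)
    {i j : ℕ → Fin (M ^ d)} {n : ℕ}
    (hi : TInf d M X ω i) (hj : TInf d M X ω j) (hne : i n ≠ j n) :
    dist (tailPoint lab X e ω n i) (tailPoint lab X e ω n j)
        ≤ (2 * (M:ℝ) + 1) * dist (PiInf d M lab (shiftW d M n i)) (PiInf d M lab (shiftW d M n j))
      ∧ dist (PiInf d M lab (shiftW d M n i)) (PiInf d M lab (shiftW d M n j))
        ≤ (2 * (M:ℝ) + 1) *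
          dist (tailPoint lab X e ω n i) (tailPoint lab X e ω n j) := by
  have hM0 : (0:ℝ) < M := by exact_mod_cast Nat.lt_of_lt_of_le (by norm_num) hM
  by_cases hex : ∃ q, BdryDead d M X ω (wordTake d M i (n + 1 + q)) ∨
      BdryDead d M X ω (wordTake d M j (n + 1 + q))
  · set q₀ := Nat.find hex with hq0def
    have hq₀ := Nat.find_spec hex
    have hminq : ∀ m, m < q₀ → ¬ (BdryDead d M X ω (wordTake d M i (n + 1 + m)) ∨
        BdryDead d M X ω (wordTake d M j (n + 1 + m))) := fun m hm => Nat.find_min hex hm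
    have hmin : ∀ m < q₀, ¬ BdryDead d M X ω (wordTake d M i (n + 1 + m)) ∧
        ¬ BdryDead d M X ω (wordTake d M j (n + 1 + m)) := by
      intro m hm
      have := hminq m hm
      push_neg at this
      exact this
    rcases hq₀ with hqi | hqj
    · exact coreAux hM hlab he hi hne hqi hmin
    · have h0 := coreAux hM hlab he hj (Ne.symm hne) hqj
        (fun m hm => ⟨(hmin m hm).2, (hmin m hm).1⟩)
      rw [dist_comm (tailPoint lab X e ω n j), dist_comm (PiInf d M lab (shiftW d M n j))] at h0
      exact h0
  · push_neg at hex
    have hti : tailPoint lab X e ω n i = PiInf d M lab (shiftW d M n i) := by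
      funext k
      have h1 : ∀ N, tailSeq X e ω n i N = wordTake d M (shiftW d M n i) (N + 1) :=
        fun N => tailSeq_plain (fun m _ => (hex m).1)
      calc (⨆ N, corner d M lab (tailSeq X e ω n i N) k)
          = ⨆ N, corner d M lab (wordTake d M (shiftW d M n i) (1 + N)) k := by
            refine iSup_congr fun N => ?_
            rw [h1 N, Nat.add_comm]
        _ = ⨆ N, corner d M lab (wordTake d M (shiftW d M n i) N) k :=
            (ciSup_corner_shift hM (chain_wordTake _) 1 k).symm
    have htj : tailPoint lab X e ω n j = PiInf d M lab (shiftW d M n j) := by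
      funext k
      have h1 : ∀ N, tailSeq X e ω n j N = wordTake d M (shiftW d M n j) (N + 1) :=
        fun N => tailSeq_plain (fun m _ => (hex m).2)
      calc (⨆ N, corner d M lab (tailSeq X e ω n j N) k)
          = ⨆ N, corner d M lab (wordTake d M (shiftW d M n j) (1 + N)) k := by
            refine iSup_congr fun N => ?_
            rw [h1 N, Nat.add_comm]
        _ = ⨆ N, corner d M lab (wordTake d M (shiftW d M n j) N) k :=
            (ciSup_corner_shift hM (chain_wordTake _) 1 k).symm
    rw [hti, htj]
    constructor <;> nlinarith [dist_nonneg (x := PiInf d M lab (shiftW d M n i))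
      (y := PiInf d M lab (shiftW d M n j)), hM0]

end Core


section Decomp2

variable {Ω : Type*} {X : List (Fin (M ^ d)) → Ω → Bool} {e : List (Fin (M ^ d))} {ω : Ω}

lemma piInf_decomp (hM : 3 ≤ M) (i : ℕ → Fin (M ^ d)) (n : ℕ) :
    PiInf d M lab i = fun k => corner d M lab (wordTake d M i n) k
      + ((M : ℝ) ^ n)⁻¹ * PiInf d M lab (shiftW d M n i) k := by
  have h := decomp (lab := lab) hM (chain_wordTake i)
    (P := wordTake d M i n) (m := n)
    (h := fun N => wordTake d M (shiftW d M n i) N) (fun N => wordTake_add i n N)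
  rw [length_wordTake] at h
  exact h

lemma subst_suffix_succ (i : ℕ → Fin (M ^ d)) (n N : ℕ) :
    substAux d M X e ω (wordTake d M i n) (wordTake d M (shiftW d M n i) (N + 1))
      = (if BdryDead d M X ω (wordTake d M i n) then e else []) ++ tailSeq X e ω n i N := by
  rw [wordTake_shift_succ, substAux_append, substAux_cons, substAux_nil, tailSeq,
    ← wordTake_succ]
  by_cases hB : BdryDead d M X ω (wordTake d M i n) <;> simp [hB]

lemma tilde_suffix_eq (hM : 3 ≤ M) (i : ℕ → Fin (M ^ d)) (n : ℕ)
    (hB : ¬ BdryDead d M X ω (wordTake d M i n)) :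
    ∀ k, (⨆ N, corner d M lab
        (substAux d M X e ω (wordTake d M i n) (wordTake d M (shiftW d M n i) N)) k)
      = tailPoint lab X e ω n i k := by
  intro k
  calc (⨆ N, corner d M lab
        (substAux d M X e ω (wordTake d M i n) (wordTake d M (shiftW d M n i) N)) k)
      = ⨆ N, corner d M lab
        (substAux d M X e ω (wordTake d M i n) (wordTake d M (shiftW d M n i) (1 + N))) k :=
        ciSup_corner_shift hM (chain_subst _ _) 1 k
    _ = ⨆ N, corner d M lab (tailSeq X e ω n i N) k := by
        refine iSup_congr fun N => ?_
        rw [Nat.add_comm 1 N, subst_suffix_succ, if_neg hB, List.nil_append]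

lemma tilde_suffix_eq' (hM : 3 ≤ M) (i : ℕ → Fin (M ^ d)) (n : ℕ)
    (hB : BdryDead d M X ω (wordTake d M i n)) :
    ∀ k, (⨆ N, corner d M lab
        (substAux d M X e ω (wordTake d M i n) (wordTake d M (shiftW d M n i) N)) k)
      = corner d M lab e k + ((M : ℝ) ^ e.length)⁻¹ * tailPoint lab X e ω n i k := by
  intro k
  have h := decomp (lab := lab) hM
    (g := fun N => substAux d M X e ω (wordTake d M i n) (wordTake d M (shiftW d M n i) N))
    (chain_subst _ _) (P := e) (m := 1) (h := fun N => tailSeq X e ω n i N) ?_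
  · exact congrFun h k
  · intro N
    rw [Nat.add_comm 1 N, subst_suffix_succ, if_pos hB]

lemma piTilde_decomp (hM : 3 ≤ M) (i : ℕ → Fin (M ^ d)) (n : ℕ) :
    PiTilde d M lab X e ω i = fun k => corner d M lab (substW d M X e ω (wordTake d M i n)) k
      + ((M : ℝ) ^ (substW d M X e ω (wordTake d M i n)).length)⁻¹ *
        ⨆ N, corner d M lab
          (substAux d M X e ω (wordTake d M i n) (wordTake d M (shiftW d M n i) N)) k := by
  have h := decomp (lab := lab) hM
    (g := fun N => substW d M X e ω (wordTake d M i N))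
    (chain_subst ([]) i) (P := substW d M X e ω (wordTake d M i n)) (m := n)
    (h := fun N => substAux d M X e ω (wordTake d M i n) (wordTake d M (shiftW d M n i) N)) ?_
  · exact h
  · intro N
    rw [wordTake_add, substW, substW, substAux_append]
    simp

end Decomp2

end Aux


theorem statement7
    (d M : ℕ) (hd : 1 ≤ d) (hM : 3 ≤ M)
    (lab : Fin (M ^ d) → Fin d → Fin M) (hlab : LabSpec d M lab)
    (K : ℕ) :
    ∃ C : ℝ, 1 ≤ C ∧
      ∀ (e : List (Fin (M ^ d))), EtaSpec d M K e →
        ∀ (Ω : Type*) (X : List (Fin (M ^ d)) → Ω → Bool) (ω : Ω)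
          (i j : ℕ → Fin (M ^ d)), TInf d M X ω i → TInf d M X ω j →
          ∀ n : ℕ, wordTake d M i n = wordTake d M j n → i n ≠ j n →
            C⁻¹ * ((M : ℝ) ^ ((n : ℤ) - ((substW d M X e ω (wordTake d M i n)).length : ℤ)) *
                dist (PiInf d M lab i) (PiInf d M lab j)) ≤
                dist (PiTilde d M lab X e ω i) (PiTilde d M lab X e ω j) ∧
              dist (PiTilde d M lab X e ω i) (PiTilde d M lab X e ω j) ≤
                C * ((M : ℝ) ^ ((n : ℤ) - ((substW d M X e ω (wordTake d M i n)).length : ℤ)) *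
                dist (PiInf d M lab i) (PiInf d M lab j)) ∧
              ((M : ℝ) ^ ((substW d M X e ω (wordTake d M i n)).length))⁻¹ *
                  dist (PiInf d M lab (shiftW d M n i)) (PiInf d M lab (shiftW d M n j)) =
                (M : ℝ) ^ ((n : ℤ) - ((substW d M X e ω (wordTake d M i n)).length : ℤ)) *
                dist (PiInf d M lab i) (PiInf d M lab j) := by
  have hM3 : (3:ℝ) ≤ (M:ℝ) := by exact_mod_cast hM
  have hM0 : (0:ℝ) < M := by linarith
  refine ⟨(2 * (M:ℝ) + 1) * (M:ℝ) ^ K, ?_, ?_⟩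
  · have h1 : (1:ℝ) ≤ (M:ℝ) ^ K := one_le_pow₀ (by linarith)
    nlinarith
  intro e he Ω X ω i j hi hj n hw hne
  obtain ⟨hK1, heK, a, l, hea, haB⟩ := he
  have hMK0 : (0:ℝ) < (M:ℝ) ^ K := by positivity
  have hMK1 : (1:ℝ) ≤ (M:ℝ) ^ K := one_le_pow₀ (by linarith)
  have hc0 : (0:ℝ) < 2 * (M:ℝ) + 1 := by linarith
  have hcore := core (ω := ω) hM hlab ⟨hK1, heK, a, l, hea, haB⟩ hi hj hne
  have hS0 : (0:ℝ) ≤ dist (PiInf d M lab (shiftW d M n i))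
      (PiInf d M lab (shiftW d M n j)) := dist_nonneg
  have hD0 : (0:ℝ) ≤ dist (tailPoint lab X e ω n i) (tailPoint lab X e ω n j) := dist_nonneg
  have hdist1 : dist (PiInf d M lab i) (PiInf d M lab j)
      = ((M:ℝ) ^ n)⁻¹ *
        dist (PiInf d M lab (shiftW d M n i)) (PiInf d M lab (shiftW d M n j)) := by
    rw [piInf_decomp hM i n, piInf_decomp hM j n, ← hw]
    exact dist_affine _ _ _ (by positivity)
  have hrL0 : (0:ℝ) ≤ ((M:ℝ) ^ (substW d M X e ω (wordTake d M i n)).length)⁻¹ := by positivity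
  have hre : (M:ℝ) ^ ((n : ℤ) - ((substW d M X e ω (wordTake d M i n)).length : ℤ))
        * dist (PiInf d M lab i) (PiInf d M lab j)
      = ((M:ℝ) ^ (substW d M X e ω (wordTake d M i n)).length)⁻¹
        * dist (PiInf d M lab (shiftW d M n i)) (PiInf d M lab (shiftW d M n j)) := by
    rw [hdist1, zpow_sub₀ (ne_of_gt hM0), zpow_natCast, zpow_natCast]
    have hMn : ((M:ℝ) ^ n) ≠ 0 := by positivity
    have hML : ((M:ℝ) ^ (substW d M X e ω (wordTake d M i n)).length) ≠ 0 := by positivity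
    field_simp
  have hrho : ∃ ρ : ℝ, ((M:ℝ) ^ K)⁻¹ ≤ ρ ∧ ρ ≤ 1 ∧
      dist (PiTilde d M lab X e ω i) (PiTilde d M lab X e ω j)
        = ((M:ℝ) ^ (substW d M X e ω (wordTake d M i n)).length)⁻¹
          * (ρ * dist (tailPoint lab X e ω n i) (tailPoint lab X e ω n j)) := by
    by_cases hB : BdryDead d M X ω (wordTake d M i n)
    · have hBj : BdryDead d M X ω (wordTake d M j n) := hw ▸ hB
      refine ⟨((M:ℝ) ^ K)⁻¹, le_rfl, inv_le_one_of_one_le₀ hMK1, ?_⟩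
      have hZi := tilde_suffix_eq' (lab := lab) (e := e) hM i n hB
      have hZj := tilde_suffix_eq' (lab := lab) (e := e) hM j n hBj
      rw [← hw] at hZj
      rw [piTilde_decomp hM i n, piTilde_decomp hM j n, ← hw]
      simp only [hZi, hZj, heK]
      rw [dist_affine _ _ _ hrL0,
        dist_affine _ _ _ (by positivity : (0:ℝ) ≤ ((M:ℝ) ^ K)⁻¹)]
    · have hBj : ¬ BdryDead d M X ω (wordTake d M j n) := by
        rw [← hw]
        exact hB
      refine ⟨1, inv_le_one_of_one_le₀ hMK1, le_rfl, ?_⟩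
      have hZi := tilde_suffix_eq (lab := lab) (e := e) hM i n hB
      have hZj := tilde_suffix_eq (lab := lab) (e := e) hM j n hBj
      rw [← hw] at hZj
      rw [piTilde_decomp hM i n, piTilde_decomp hM j n, ← hw]
      simp only [hZi, hZj]
      rw [dist_affine _ _ _ hrL0, one_mul]
  set S := dist (PiInf d M lab (shiftW d M n i)) (PiInf d M lab (shiftW d M n j)) with hSdef
  set D := dist (tailPoint lab X e ω n i) (tailPoint lab X e ω n j) with hDdef
  set rL := ((M:ℝ) ^ (substW d M X e ω (wordTake d M i n)).length)⁻¹ with hrLdef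
  obtain ⟨ρ, hρ1, hρ2, hTT⟩ := hrho
  refine ⟨?_, ?_, ?_⟩
  · rw [hre, hTT]
    have ha : (2 * (M:ℝ) + 1)⁻¹ * S ≤ D := by
      rw [inv_mul_le_iff₀ hc0]
      exact hcore.2
    have hb : ((M:ℝ) ^ K)⁻¹ * ((2 * (M:ℝ) + 1)⁻¹ * S) ≤ ((M:ℝ) ^ K)⁻¹ * D :=
      mul_le_mul_of_nonneg_left ha (by positivity)
    have hcD : ((M:ℝ) ^ K)⁻¹ * D ≤ ρ * D := mul_le_mul_of_nonneg_right hρ1 hD0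
    have h1 : ((2 * (M:ℝ) + 1) * (M:ℝ) ^ K)⁻¹ * S ≤ ρ * D := by
      have heq : ((2 * (M:ℝ) + 1) * (M:ℝ) ^ K)⁻¹ * S
          = ((M:ℝ) ^ K)⁻¹ * ((2 * (M:ℝ) + 1)⁻¹ * S) := by
        rw [mul_inv]
        ring
      rw [heq]
      exact hb.trans hcD
    have h2 : ((2 * (M:ℝ) + 1) * (M:ℝ) ^ K)⁻¹ * (rL * S)
        = rL * (((2 * (M:ℝ) + 1) * (M:ℝ) ^ K)⁻¹ * S) := by ring
    rw [h2]
    exact mul_le_mul_of_nonneg_left h1 hrL0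
  · rw [hre, hTT]
    have h1 : ρ * D ≤ (2 * (M:ℝ) + 1) * (M:ℝ) ^ K * S := by
      have ha : ρ * D ≤ D := mul_le_of_le_one_left hD0 hρ2
      have hb : D ≤ (2 * (M:ℝ) + 1) * S := hcore.1
      have hcC : (2 * (M:ℝ) + 1) * S ≤ (2 * (M:ℝ) + 1) * (M:ℝ) ^ K * S := by nlinarith
      linarith
    calc rL * (ρ * D) ≤ rL * ((2 * (M:ℝ) + 1) * (M:ℝ) ^ K * S) :=
          mul_le_mul_of_nonneg_left h1 hrL0
      _ = (2 * (M:ℝ) + 1) * (M:ℝ) ^ K * (rL * S) := by ring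
  · exact hre.symm

end FractalPercolation
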